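/- Fejér's theorem: let f : ℝ → ℂ be continuous and 2π-periodic, with Fourier coefficients c_k = (1/2π)∫₀^{2π} f(x) e^{−ikx} dx, partial sums s_n(x) = Σ_{k=−n}^{n} c_k e^{ikx}, and Cesàro means σ_n(f; x) = (s₀(x) + ⋯ + s_n(x))/(n+1). Then σ_n(f; ·) converges to f uniformly on ℝ as n → ∞. -/

import Mathlib

open Complex Finset intervalIntegral MeasureTheory Filter

noncomputable def Eker (n : ℕ) (u : ℝ) : ℂ :=
  ∑ j ∈ Finset.range (n+1), Complex.exp (Complex.I * j * u)

noncomputable def Kker (n : ℕ) (u : ℝ) : ℂ :=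
  ∑ j ∈ Finset.range (n+1), ∑ k ∈ Finset.Icc (-(j:ℤ)) (j:ℤ), Complex.exp (Complex.I * k * u)

noncomputable def cc (g : ℝ → ℂ) (k : ℤ) : ℂ :=
  (1 / (2 * Real.pi) : ℂ) * ∫ x in (0:ℝ)..(2*Real.pi), g x * Complex.exp (-Complex.I * k * x)

noncomputable def ss (g : ℝ → ℂ) (j : ℕ) (x : ℝ) : ℂ :=
  ∑ k ∈ Finset.Icc (-(j:ℤ)) (j:ℤ), cc g k * Complex.exp (Complex.I * k * x)

noncomputable def σσ (g : ℝ → ℂ) (n : ℕ) (x : ℝ) : ℂ :=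
  (∑ j ∈ Finset.range (n+1), ss g j x) / (n+1)

lemma sum_range_shift_up (φ : ℤ → ℂ) (M : ℕ) (d : ℤ) :
    ∑ a ∈ Finset.range M, φ (d + a) = ∑ k ∈ Finset.Icc d (d + M - 1), φ k := by
  refine Finset.sum_nbij' (fun a => d + (a : ℤ)) (fun k => (k - d).toNat) ?_ ?_ ?_ ?_ ?_
  · intro a ha; simp only [Finset.mem_range] at ha; simp only [Finset.mem_Icc]; omega
  · intro k hk; simp only [Finset.mem_Icc] at hk; simp only [Finset.mem_range]; omega
  · intro a _; simp
  · intro k hk; simp only [Finset.mem_Icc] at hk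
    rw [Int.toNat_of_nonneg (by omega)]; ring
  · intro a _; rfl

lemma sum_range_shift_down (φ : ℤ → ℂ) (M : ℕ) (d : ℤ) :
    ∑ a ∈ Finset.range M, φ (d - a) = ∑ k ∈ Finset.Icc (d - M + 1) d, φ k := by
  refine Finset.sum_nbij' (fun a => d - (a : ℤ)) (fun k => (d - k).toNat) ?_ ?_ ?_ ?_ ?_
  · intro a ha; simp only [Finset.mem_range] at ha; simp only [Finset.mem_Icc]; omega
  · intro k hk; simp only [Finset.mem_Icc] at hk; simp only [Finset.mem_range]; omega
  · intro a _; simp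
  · intro k hk; simp only [Finset.mem_Icc] at hk
    rw [Int.toNat_of_nonneg (by omega)]; ring
  · intro a _; rfl

lemma comb (φ : ℤ → ℂ) (n : ℕ) :
    ∑ j ∈ Finset.range (n+1), ∑ k ∈ Finset.Icc (-(j:ℤ)) (j:ℤ), φ k
      = ∑ a ∈ Finset.range (n+1), ∑ b ∈ Finset.range (n+1), φ ((a:ℤ) - b) := by
  induction n with
  | zero => simp
  | succ n ih =>
    rw [Finset.sum_range_succ, ih]
    have h1 : ∑ b ∈ Finset.range (n+2), φ (((n:ℤ)+1) - (b:ℤ))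
        = ∑ k ∈ Finset.Icc (0:ℤ) ((n:ℤ)+1), φ k := by
      rw [sum_range_shift_down φ (n+2) ((n:ℤ)+1)]
      congr 1; congr 1; push_cast; ring
    have h2 : ∑ a ∈ Finset.range (n+1), φ ((a:ℤ) - ((n:ℤ)+1))
        = ∑ k ∈ Finset.Icc (-(n:ℤ)-1) (-1), φ k := by
      calc ∑ a ∈ Finset.range (n+1), φ ((a:ℤ) - ((n:ℤ)+1))
          = ∑ a ∈ Finset.range (n+1), φ ((-(n:ℤ)-1) + (a:ℤ)) := by
            apply Finset.sum_congr rfl; intro a _; congr 1; ring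
        _ = ∑ k ∈ Finset.Icc (-(n:ℤ)-1) (-(n:ℤ)-1 + (n+1) - 1), φ k :=
            sum_range_shift_up φ (n+1) (-(n:ℤ)-1)
        _ = ∑ k ∈ Finset.Icc (-(n:ℤ)-1) (-1), φ k := by congr 1; congr 1; push_cast; ring
    have split : Finset.Icc (-((n:ℤ)+1)) ((n:ℤ)+1)
        = Finset.Icc (-(n:ℤ)-1) (-1) ∪ Finset.Icc (0:ℤ) ((n:ℤ)+1) := by
      ext k; simp only [Finset.mem_union, Finset.mem_Icc]; omega
    have hdisj : Disjoint (Finset.Icc (-(n:ℤ)-1) (-1)) (Finset.Icc (0:ℤ) ((n:ℤ)+1)) := by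
      rw [Finset.disjoint_left]; intro k hk hk'
      simp only [Finset.mem_Icc] at hk hk'; omega
    conv_rhs => rw [Finset.sum_range_succ]
    have expand : ∀ a : ℕ, ∑ b ∈ Finset.range (n+1+1), φ ((a:ℤ) - b)
        = ∑ b ∈ Finset.range (n+1), φ ((a:ℤ) - b) + φ ((a:ℤ) - ((n:ℤ)+1)) := by
      intro a; rw [Finset.sum_range_succ]; push_cast; ring_nf
    simp only [expand]
    rw [Finset.sum_add_distrib]
    push_cast
    rw [split, Finset.sum_union hdisj, h2]
    have h3 : ∑ x ∈ Finset.range (n+1), φ ((n:ℤ)+1-(x:ℤ)) + φ ((n:ℤ)+1-((n:ℤ)+1))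
        = ∑ k ∈ Finset.Icc (0:ℤ) ((n:ℤ)+1), φ k := by
      have hrs := Finset.sum_range_succ (fun b : ℕ => φ ((n:ℤ)+1 - (b:ℤ))) (n+1)
      have hcast : ((n+1:ℕ):ℤ) = (n:ℤ)+1 := by push_cast; ring
      rw [← h1, hrs, hcast]
    rw [← h3]
    ring

lemma kker_eq_normSq (n : ℕ) (u : ℝ) :
    Kker n u = ((Complex.normSq (Eker n u) : ℝ) : ℂ) := by
  rw [Kker, comb (fun k => Complex.exp (Complex.I * k * u)) n, ← Complex.mul_conj]
  have hconj : (starRingEnd ℂ) (Eker n u) = ∑ b ∈ Finset.range (n+1),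
      Complex.exp (-(Complex.I * b * u)) := by
    rw [Eker, map_sum]
    apply Finset.sum_congr rfl
    intro b _
    rw [← Complex.exp_conj]
    congr 1
    simp [Complex.conj_I]
  rw [hconj, Eker, Finset.sum_mul_sum]
  apply Finset.sum_congr rfl; intro a _
  apply Finset.sum_congr rfl; intro b _
  rw [← Complex.exp_add]
  congr 1
  push_cast
  ring

lemma int_exp (k : ℤ) :
    (∫ t in (0:ℝ)..(2*Real.pi), Complex.exp (Complex.I * k * t))
      = if k = 0 then ((2*Real.pi : ℝ) : ℂ) else 0 := by
  rcases eq_or_ne k 0 with hk | hk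
  · simp [hk]
  · rw [if_neg hk]
    have hc : (Complex.I * k : ℂ) ≠ 0 := by
      simp [Complex.I_ne_zero, hk]
    rw [integral_exp_mul_complex hc]
    have h1 : Complex.exp (Complex.I * (k:ℂ) * ((2*Real.pi : ℝ):ℂ)) = 1 := by
      have := Complex.exp_int_mul_two_pi_mul_I k
      rw [← this]
      congr 1
      push_cast
      ring
    rw [h1]
    simp

lemma exp_cont (k : ℤ) (x : ℝ) :
    Continuous fun t : ℝ => Complex.exp (Complex.I * k * (x - t : ℝ)) := by
  fun_prop

lemma exp_cont' (k : ℤ) : Continuous fun t : ℝ => Complex.exp (Complex.I * k * (t : ℝ)) := by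
  fun_prop

lemma int_exp_shift (k : ℤ) (x : ℝ) :
    (∫ t in (0:ℝ)..(2*Real.pi), Complex.exp (Complex.I * k * ((x - t : ℝ) : ℂ)))
      = if k = 0 then ((2*Real.pi : ℝ) : ℂ) else 0 := by
  have h : ∀ t : ℝ, Complex.exp (Complex.I * k * ((x - t : ℝ) : ℂ))
      = Complex.exp (Complex.I * k * (x : ℝ)) * Complex.exp (Complex.I * (-k : ℤ) * (t : ℝ)) := by
    intro t
    rw [← Complex.exp_add]
    congr 1
    push_cast
    ring
  simp only [h]
  rw [intervalIntegral.integral_const_mul, int_exp (-k)]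
  rcases eq_or_ne k 0 with hk | hk
  · simp [hk]
  · simp [hk, neg_eq_zero]

lemma kker_integral (n : ℕ) (x : ℝ) :
    (∫ t in (0:ℝ)..(2*Real.pi), Kker n (x - t))
      = ((2*Real.pi*(n+1) : ℝ) : ℂ) := by
  unfold Kker
  rw [intervalIntegral.integral_finset_sum]
  swap
  · intro j _
    apply Continuous.intervalIntegrable
    exact continuous_finset_sum _ fun k _ => exp_cont k x
  have : ∀ j ∈ Finset.range (n+1),
      (∫ t in (0:ℝ)..(2*Real.pi), ∑ k ∈ Finset.Icc (-(j:ℤ)) (j:ℤ),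
        Complex.exp (Complex.I * k * ((x - t : ℝ) : ℂ)))
      = ((2*Real.pi : ℝ) : ℂ) := by
    intro j _
    rw [intervalIntegral.integral_finset_sum (fun k _ => (exp_cont k x).intervalIntegrable _ _)]
    simp only [int_exp_shift]
    rw [Finset.sum_ite_eq' (Finset.Icc (-(j:ℤ)) (j:ℤ)) (0:ℤ) (fun _ => ((2*Real.pi:ℝ):ℂ))]
    simp
  rw [Finset.sum_congr rfl this]
  simp
  push_cast
  ring

lemma rep (g : ℝ → ℂ) (hg : Continuous g) (n : ℕ) (x : ℝ) :
    ∑ j ∈ Finset.range (n+1), ss g j x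
      = (1/(2*Real.pi) : ℂ) * ∫ t in (0:ℝ)..(2*Real.pi), g t * Kker n (x - t) := by
  have key : ∀ k : ℤ, cc g k * Complex.exp (Complex.I * k * (x:ℝ))
      = (1/(2*Real.pi):ℂ) * ∫ t in (0:ℝ)..(2*Real.pi),
          g t * Complex.exp (Complex.I * k * ((x - t : ℝ) : ℂ)) := by
    intro k
    rw [cc, mul_assoc]
    congr 1
    rw [← intervalIntegral.integral_mul_const]
    apply intervalIntegral.integral_congr
    intro t _
    simp only []
    rw [mul_assoc, mul_assoc, ← Complex.exp_add]
    congr 2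
    push_cast
    ring
  have hker : (fun t : ℝ => g t * Kker n (x - t))
      = fun t : ℝ => ∑ j ∈ Finset.range (n+1), ∑ k ∈ Finset.Icc (-(j:ℤ)) (j:ℤ),
          g t * Complex.exp (Complex.I * k * ((x - t : ℝ) : ℂ)) := by
    funext t
    rw [Kker, Finset.mul_sum]
    exact Finset.sum_congr rfl fun j _ => Finset.mul_sum _ _ _
  rw [hker, intervalIntegral.integral_finset_sum
      (fun j _ => Continuous.intervalIntegrable
        (continuous_finset_sum _ fun k _ => (show Continuous (fun t : ℝ => g t * Complex.exp (Complex.I * (k : ℤ) * ((x - t : ℝ) : ℂ))) from hg.mul (exp_cont k x))) _ _),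
    Finset.mul_sum]
  apply Finset.sum_congr rfl
  intro j _
  rw [ss, intervalIntegral.integral_finset_sum
      (fun k _ => ((show Continuous (fun t : ℝ => g t * Complex.exp (Complex.I * (k : ℤ) * ((x - t : ℝ) : ℂ))) from hg.mul (exp_cont k x)).intervalIntegrable _ _)),
    Finset.mul_sum]
  exact Finset.sum_congr rfl fun k _ => key k

lemma contraction (g : ℝ → ℂ) (hg : Continuous g) (M : ℝ) (hM : ∀ t, ‖g t‖ ≤ M)
    (n : ℕ) (x : ℝ) : ‖σσ g n x‖ ≤ M := by
  have hM0 : 0 ≤ M := le_trans (norm_nonneg _) (hM 0)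
  have h2π : (0:ℝ) < 2*Real.pi := by positivity
  have hEcont : Continuous fun t : ℝ => Complex.normSq (Eker n (x - t)) := by
    apply Complex.continuous_normSq.comp
    exact continuous_finset_sum _ fun j _ => exp_cont j x
  -- integral of the real kernel
  have hKint : (∫ t in (0:ℝ)..(2*Real.pi), Complex.normSq (Eker n (x - t)))
      = 2*Real.pi*(n+1) := by
    apply Complex.ofReal_injective
    rw [show ((∫ t in (0:ℝ)..(2*Real.pi), Complex.normSq (Eker n (x - t)) : ℝ) : ℂ)
        = ∫ t in (0:ℝ)..(2*Real.pi), ((Complex.normSq (Eker n (x - t)) : ℝ) : ℂ) from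
        (RCLike.intervalIntegral_ofReal (𝕜 := ℂ)).symm]
    rw [show (fun t : ℝ => ((Complex.normSq (Eker n (x - t)) : ℝ) : ℂ))
        = fun t : ℝ => Kker n (x - t) from funext fun t => (kker_eq_normSq n (x-t)).symm]
    exact kker_integral n x
  -- bound the complex integral
  have hbound : ‖∫ t in (0:ℝ)..(2*Real.pi), g t * Kker n (x - t)‖ ≤ M * (2*Real.pi*(n+1)) := by
    calc ‖∫ t in (0:ℝ)..(2*Real.pi), g t * Kker n (x - t)‖
        ≤ ∫ t in (0:ℝ)..(2*Real.pi), ‖g t * Kker n (x - t)‖ :=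
          intervalIntegral.norm_integral_le_integral_norm (le_of_lt h2π)
      _ ≤ ∫ t in (0:ℝ)..(2*Real.pi), M * Complex.normSq (Eker n (x - t)) := by
          apply intervalIntegral.integral_mono_on (le_of_lt h2π)
          · apply Continuous.intervalIntegrable
            apply Continuous.norm
            apply hg.mul
            exact continuous_finset_sum _ fun j _ =>
              continuous_finset_sum _ fun k _ => exp_cont k x
          · exact (Continuous.intervalIntegrable (by fun_prop) _ _)
          · intro t _
            rw [norm_mul, kker_eq_normSq]
            have h1 : ‖((Complex.normSq (Eker n (x - t)) : ℝ) : ℂ)‖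
                = Complex.normSq (Eker n (x - t)) := by
              rw [Complex.norm_real, Real.norm_eq_abs,
                _root_.abs_of_nonneg (Complex.normSq_nonneg _)]
            rw [h1]
            exact mul_le_mul_of_nonneg_right (hM t) (Complex.normSq_nonneg _)
      _ = M * (2*Real.pi*(n+1)) := by
          rw [intervalIntegral.integral_const_mul, hKint]
  -- assemble
  rw [σσ, rep g hg n x]
  rw [norm_div, norm_mul]
  have hc1 : ‖(1/(2*Real.pi) : ℂ)‖ = 1/(2*Real.pi) := by
    rw [show (1/(2*Real.pi) : ℂ) = ((1/(2*Real.pi) : ℝ) : ℂ) by push_cast; ring,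
      Complex.norm_real, Real.norm_eq_abs, _root_.abs_of_pos (by positivity)]
  have hc2 : ‖((n:ℂ)+1)‖ = (n:ℝ)+1 := by
    rw [show ((n:ℂ)+1) = (((n:ℝ)+1 : ℝ) : ℂ) by push_cast; ring,
      Complex.norm_real, Real.norm_eq_abs, _root_.abs_of_pos (by positivity)]
  rw [hc1, hc2, div_le_iff₀ (by positivity)]
  calc 1/(2*Real.pi) * ‖∫ t in (0:ℝ)..(2*Real.pi), g t * Kker n (x - t)‖
      ≤ 1/(2*Real.pi) * (M * (2*Real.pi*(n+1))) := by
        exact mul_le_mul_of_nonneg_left hbound (by positivity)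
    _ = M * ((n:ℝ)+1) := by field_simp

lemma norm_exp_I (k : ℤ) (x : ℝ) : ‖Complex.exp (Complex.I * k * x)‖ = 1 := by
  rw [Complex.norm_exp]
  norm_num

lemma cc_sub (g h : ℝ → ℂ) (hg : Continuous g) (hh : Continuous h) (k : ℤ) :
    cc (fun t => g t - h t) k = cc g k - cc h k := by
  unfold cc
  rw [← mul_sub]
  congr 1
  rw [← intervalIntegral.integral_sub ((show Continuous (fun x : ℝ => g x * Complex.exp (-Complex.I * k * x)) by fun_prop).intervalIntegrable _ _)
    ((show Continuous (fun x : ℝ => h x * Complex.exp (-Complex.I * k * x)) by fun_prop).intervalIntegrable _ _)]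
  apply intervalIntegral.integral_congr
  intro t _
  simp only []
  ring

lemma σσ_sub (g h : ℝ → ℂ) (hg : Continuous g) (hh : Continuous h) (n : ℕ) (x : ℝ) :
    σσ (fun t => g t - h t) n x = σσ g n x - σσ h n x := by
  unfold σσ
  rw [← sub_div, ← Finset.sum_sub_distrib]
  congr 1
  apply Finset.sum_congr rfl
  intro j _
  unfold ss
  rw [← Finset.sum_sub_distrib]
  apply Finset.sum_congr rfl
  intro k _
  rw [cc_sub g h hg hh, sub_mul]

section Poly

variable (m : ℕ) (a : ℤ → ℂ)

lemma poly_cont : Continuous fun x : ℝ =>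
    ∑ k ∈ Finset.Icc (-(m:ℤ)) (m:ℤ), a k * Complex.exp (Complex.I * k * x) := by
  apply continuous_finset_sum
  intro k _
  fun_prop

lemma cc_poly (k : ℤ) :
    cc (fun x => ∑ l ∈ Finset.Icc (-(m:ℤ)) (m:ℤ), a l * Complex.exp (Complex.I * l * x)) k
      = if k ∈ Finset.Icc (-(m:ℤ)) (m:ℤ) then a k else 0 := by
  unfold cc
  have hpt : ∀ t : ℝ,
      (∑ l ∈ Finset.Icc (-(m:ℤ)) (m:ℤ), a l * Complex.exp (Complex.I * l * t))
        * Complex.exp (-Complex.I * k * t)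
      = ∑ l ∈ Finset.Icc (-(m:ℤ)) (m:ℤ), a l * Complex.exp (Complex.I * ((l - k : ℤ) : ℂ) * t) := by
    intro t
    rw [Finset.sum_mul]
    apply Finset.sum_congr rfl
    intro l _
    rw [mul_assoc, ← Complex.exp_add]
    congr 2
    push_cast
    ring
  simp only [hpt]
  rw [intervalIntegral.integral_finset_sum (fun l _ =>
    (Continuous.intervalIntegrable (by fun_prop) _ _))]
  have : ∀ l ∈ Finset.Icc (-(m:ℤ)) (m:ℤ),
      (∫ t in (0:ℝ)..(2*Real.pi), a l * Complex.exp (Complex.I * ((l - k : ℤ) : ℂ) * t))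
      = if l = k then a l * ((2*Real.pi:ℝ):ℂ) else 0 := by
    intro l _
    rw [intervalIntegral.integral_const_mul, int_exp (l - k)]
    rcases eq_or_ne l k with h | h
    · simp [h]
    · simp [h, sub_eq_zero, mul_ite]
  rw [Finset.sum_congr rfl this, Finset.sum_ite_eq' (Finset.Icc (-(m:ℤ)) (m:ℤ)) k
    (fun l => a l * ((2*Real.pi:ℝ):ℂ))]
  have h2 : (2*(Real.pi:ℂ)) ≠ 0 := by
    have : ((2*Real.pi:ℝ):ℂ) ≠ 0 := Complex.ofReal_ne_zero.mpr (by positivity)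
    push_cast at this
    exact this
  split_ifs with h
  · rw [mul_comm (a k) (((2*Real.pi:ℝ)):ℂ), ← mul_assoc]
    have h3 : (1 / (2*Real.pi) : ℂ) * ((2*Real.pi:ℝ):ℂ) = 1 := by
      push_cast
      rw [one_div, inv_mul_cancel₀ h2]
    rw [h3, one_mul]
  · rw [mul_zero]

lemma ss_poly (j : ℕ) (x : ℝ) :
    ss (fun y => ∑ l ∈ Finset.Icc (-(m:ℤ)) (m:ℤ), a l * Complex.exp (Complex.I * l * y)) j x
      = ∑ k ∈ Finset.Icc (-(j:ℤ)) (j:ℤ) ∩ Finset.Icc (-(m:ℤ)) (m:ℤ),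
          a k * Complex.exp (Complex.I * k * x) := by
  unfold ss
  simp only [cc_poly, ite_mul, zero_mul]
  rw [Finset.sum_ite_mem]

lemma ss_poly_large (j : ℕ) (hj : m ≤ j) (x : ℝ) :
    ss (fun y => ∑ l ∈ Finset.Icc (-(m:ℤ)) (m:ℤ), a l * Complex.exp (Complex.I * l * y)) j x
      = ∑ l ∈ Finset.Icc (-(m:ℤ)) (m:ℤ), a l * Complex.exp (Complex.I * l * x) := by
  rw [ss_poly]
  congr 1
  rw [Finset.inter_eq_right]
  exact Finset.Icc_subset_Icc (by omega) (by omega)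

lemma ss_poly_bound (j : ℕ) (x : ℝ) :
    ‖ss (fun y => ∑ l ∈ Finset.Icc (-(m:ℤ)) (m:ℤ), a l * Complex.exp (Complex.I * l * y)) j x‖
      ≤ ∑ k ∈ Finset.Icc (-(m:ℤ)) (m:ℤ), ‖a k‖ := by
  rw [ss_poly]
  calc ‖∑ k ∈ Finset.Icc (-(j:ℤ)) (j:ℤ) ∩ Finset.Icc (-(m:ℤ)) (m:ℤ),
        a k * Complex.exp (Complex.I * k * x)‖
      ≤ ∑ k ∈ Finset.Icc (-(j:ℤ)) (j:ℤ) ∩ Finset.Icc (-(m:ℤ)) (m:ℤ),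
        ‖a k * Complex.exp (Complex.I * k * x)‖ := norm_sum_le _ _
    _ = ∑ k ∈ Finset.Icc (-(j:ℤ)) (j:ℤ) ∩ Finset.Icc (-(m:ℤ)) (m:ℤ), ‖a k‖ := by
        apply Finset.sum_congr rfl
        intro k _
        rw [norm_mul, norm_exp_I, mul_one]
    _ ≤ ∑ k ∈ Finset.Icc (-(m:ℤ)) (m:ℤ), ‖a k‖ :=
        Finset.sum_le_sum_of_subset_of_nonneg (Finset.inter_subset_right)
          (fun k _ _ => norm_nonneg _)

lemma poly_bound (x : ℝ) :
    ‖∑ l ∈ Finset.Icc (-(m:ℤ)) (m:ℤ), a l * Complex.exp (Complex.I * l * x)‖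
      ≤ ∑ k ∈ Finset.Icc (-(m:ℤ)) (m:ℤ), ‖a k‖ := by
  calc ‖∑ l ∈ Finset.Icc (-(m:ℤ)) (m:ℤ), a l * Complex.exp (Complex.I * l * x)‖
      ≤ ∑ l ∈ Finset.Icc (-(m:ℤ)) (m:ℤ), ‖a l * Complex.exp (Complex.I * l * x)‖ :=
        norm_sum_le _ _
    _ = ∑ k ∈ Finset.Icc (-(m:ℤ)) (m:ℤ), ‖a k‖ := by
        apply Finset.sum_congr rfl
        intro k _
        rw [norm_mul, norm_exp_I, mul_one]

lemma σσ_poly_est (n : ℕ) (hn : m ≤ n + 1) (x : ℝ) :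
    ‖σσ (fun y => ∑ l ∈ Finset.Icc (-(m:ℤ)) (m:ℤ), a l * Complex.exp (Complex.I * l * y)) n x
      - ∑ l ∈ Finset.Icc (-(m:ℤ)) (m:ℤ), a l * Complex.exp (Complex.I * l * x)‖
      ≤ (m * (2 * ∑ k ∈ Finset.Icc (-(m:ℤ)) (m:ℤ), ‖a k‖)) / ((n:ℝ)+1) := by
  set p : ℝ → ℂ := fun y => ∑ l ∈ Finset.Icc (-(m:ℤ)) (m:ℤ),
    a l * Complex.exp (Complex.I * l * y) with hp
  set A : ℝ := ∑ k ∈ Finset.Icc (-(m:ℤ)) (m:ℤ), ‖a k‖ with hA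
  have hnne : ((n:ℂ)+1) ≠ 0 := by
    have : ((n+1:ℕ):ℂ) ≠ 0 := Nat.cast_ne_zero.mpr (Nat.succ_ne_zero n)
    push_cast at this
    exact this
  have key : σσ p n x - p x
      = (∑ j ∈ Finset.range (n+1), (ss p j x - p x)) / ((n:ℂ)+1) := by
    rw [σσ, Finset.sum_sub_distrib, Finset.sum_const, Finset.card_range, sub_div, nsmul_eq_mul]
    congr 1
    rw [Nat.cast_add, Nat.cast_one, mul_div_cancel_left₀ _ hnne]
  have hvanish : ∑ j ∈ Finset.range (n+1), (ss p j x - p x)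
      = ∑ j ∈ Finset.range m, (ss p j x - p x) := by
    symm
    apply Finset.sum_subset (Finset.range_subset_range.mpr hn)
    intro j _ hj
    rw [Finset.mem_range, not_lt] at hj
    rw [ss_poly_large m a j hj x, sub_self]
  rw [key, hvanish, norm_div]
  have hden : ‖((n:ℂ)+1)‖ = (n:ℝ)+1 := by
    rw [show ((n:ℂ)+1) = (((n:ℝ)+1 : ℝ) : ℂ) by push_cast; ring,
      Complex.norm_real, Real.norm_eq_abs, _root_.abs_of_pos (by positivity)]
  rw [hden]
  have hnum : ‖∑ j ∈ Finset.range m, (ss p j x - p x)‖ ≤ (m:ℝ) * (2*A) := by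
    calc ‖∑ j ∈ Finset.range m, (ss p j x - p x)‖
        ≤ ∑ j ∈ Finset.range m, ‖ss p j x - p x‖ := norm_sum_le _ _
      _ ≤ ∑ _j ∈ Finset.range m, 2*A := by
          apply Finset.sum_le_sum
          intro j _
          calc ‖ss p j x - p x‖ ≤ ‖ss p j x‖ + ‖p x‖ := norm_sub_le _ _
            _ ≤ A + A := by
                have hb1 := ss_poly_bound m a j x
                have hb2 := poly_bound m a x
                rw [← hp] at hb1
                have hpx : p x = ∑ l ∈ Finset.Icc (-(m:ℤ)) (m:ℤ),
                    a l * Complex.exp (Complex.I * l * x) := by rw [hp]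
                rw [← hpx] at hb2
                exact add_le_add hb1 hb2
            _ = 2*A := by ring
      _ = (m:ℝ) * (2*A) := by
          rw [Finset.sum_const, Finset.card_range, nsmul_eq_mul]
  gcongr
end Poly

lemma density (f : ℝ → ℂ) (hf : Continuous f)
    (hper : ∀ x : ℝ, f (x + 2 * Real.pi) = f x) (ε : ℝ) (hε : 0 < ε) :
    ∃ (m : ℕ) (a : ℤ → ℂ), ∀ x : ℝ,
      ‖f x - ∑ k ∈ Finset.Icc (-(m:ℤ)) (m:ℤ), a k * Complex.exp (Complex.I * k * x)‖ ≤ ε := by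
  haveI : Fact (0 < 2*Real.pi) := ⟨by positivity⟩
  have hper' : Function.Periodic f (2*Real.pi) := hper
  have hlift : Continuous hper'.lift := by
    unfold Function.Periodic.lift
    exact hf.quotient_liftOn' _
  set F : C(AddCircle (2*Real.pi), ℂ) := ⟨hper'.lift, hlift⟩ with hF
  have hFmem : F ∈ closure ((Submodule.span ℂ
      (Set.range (fourier (T := 2*Real.pi)))) : Set C(AddCircle (2*Real.pi), ℂ)) := by
    have := span_fourier_closure_eq_top (T := 2*Real.pi)
    rw [← Submodule.topologicalClosure_coe]
    rw [this]
    trivial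
  rw [Metric.mem_closure_iff] at hFmem
  obtain ⟨P, hPs, hPd⟩ := hFmem ε hε
  rw [SetLike.mem_coe, Finsupp.mem_span_range_iff_exists_finsupp] at hPs
  obtain ⟨co, hco⟩ := hPs
  set m : ℕ := co.support.sup (fun k => k.natAbs) with hm
  refine ⟨m, fun k => co k, ?_⟩
  intro x
  have hfour : ∀ k : ℤ, (fourier (T := 2*Real.pi) k) ((x : ℝ) : AddCircle (2*Real.pi))
      = Complex.exp (Complex.I * k * x) := by
    intro k
    rw [fourier_coe_apply]
    congr 1
    have hπ : (Real.pi:ℂ) ≠ 0 := Complex.ofReal_ne_zero.mpr Real.pi_ne_zero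
    push_cast
    field_simp
  have hPx : P ((x : ℝ) : AddCircle (2*Real.pi))
      = ∑ k ∈ Finset.Icc (-(m:ℤ)) (m:ℤ), co k * Complex.exp (Complex.I * k * x) := by
    rw [← hco, Finsupp.sum]
    rw [ContinuousMap.sum_apply]
    have happ : ∀ k ∈ co.support, (co k • fourier (T := 2*Real.pi) k)
        ((x : ℝ) : AddCircle (2*Real.pi)) = co k * Complex.exp (Complex.I * k * x) := by
      intro k _
      rw [ContinuousMap.smul_apply, hfour k, smul_eq_mul]
    rw [Finset.sum_congr rfl happ]
    apply Finset.sum_subset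
    · intro k hk
      simp only [Finset.mem_Icc]
      have : k.natAbs ≤ m := Finset.le_sup (f := fun k : ℤ => k.natAbs) hk
      omega
    · intro k _ hk
      rw [Finsupp.notMem_support_iff.mp hk, zero_mul]
  have hfx : f x = F ((x : ℝ) : AddCircle (2*Real.pi)) := by
    rw [hF]
    rfl
  rw [← hPx, hfx, ← dist_eq_norm]
  exact le_of_lt (lt_of_le_of_lt (ContinuousMap.dist_apply_le_dist _) hPd)

/-- Fejér's theorem: the Cesàro means of the partial sums of the Fourier series of a
continuous 2π-periodic function f : ℝ → ℂ converge to f uniformly on ℝ. -/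
theorem fejer (f : ℝ → ℂ) (hf : Continuous f)
    (hper : ∀ x : ℝ, f (x + 2 * Real.pi) = f x)
    (c : ℤ → ℂ)
    (hc : ∀ k : ℤ, c k = (1 / (2 * Real.pi) : ℂ) *
      ∫ x in (0:ℝ)..(2 * Real.pi), f x * Complex.exp (-Complex.I * k * x))
    (s : ℕ → ℝ → ℂ)
    (hs : ∀ (n : ℕ) (x : ℝ), s n x =
      ∑ k ∈ Finset.Icc (-(n:ℤ)) (n:ℤ), c k * Complex.exp (Complex.I * k * x))
    (σ : ℕ → ℝ → ℂ)
    (hσ : ∀ (n : ℕ) (x : ℝ), σ n x = (∑ j ∈ Finset.range (n + 1), s j x) / (n + 1)) :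
    TendstoUniformly σ f Filter.atTop := by
  have hσσ : ∀ (n : ℕ) (x : ℝ), σ n x = σσ f n x := by
    intro n x
    rw [hσ, σσ]
    congr 1
    apply Finset.sum_congr rfl
    intro j _
    rw [hs, ss]
    exact Finset.sum_congr rfl fun k _ => by rw [hc, cc]
  rw [Metric.tendstoUniformly_iff]
  intro ε hε
  obtain ⟨m, a, hpa⟩ := density f hf hper (ε/4) (by positivity)
  set p : ℝ → ℂ := fun y => ∑ l ∈ Finset.Icc (-(m:ℤ)) (m:ℤ),
    a l * Complex.exp (Complex.I * l * y) with hp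
  have hpc : Continuous p := by rw [hp]; exact poly_cont m a
  set A : ℝ := ∑ k ∈ Finset.Icc (-(m:ℤ)) (m:ℤ), ‖a k‖ with hA
  have hA0 : (0:ℝ) ≤ A := Finset.sum_nonneg fun k _ => norm_nonneg _
  -- the tail estimate for the polynomial part tends to zero
  have h0 : Filter.Tendsto (fun n : ℕ => ((m:ℝ) * (2*A)) / ((n:ℝ)+1)) Filter.atTop (nhds 0) := by
    have h1 := tendsto_const_div_atTop_nhds_zero_nat ((m:ℝ) * (2*A))
    have h2 : Filter.Tendsto (fun n : ℕ => n + 1) Filter.atTop Filter.atTop :=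
      Filter.tendsto_add_atTop_nat 1
    have h3 := h1.comp h2
    have heq : (fun n : ℕ => ((m:ℝ) * (2*A)) / ((n:ℝ)+1))
        = ((fun n : ℕ => ((m:ℝ)*(2*A))/(n:ℝ)) ∘ fun n => n+1) := by
      funext n
      simp only [Function.comp_apply]
      push_cast
      ring
    rw [heq]
    exact h3
  have hev : ∀ᶠ n : ℕ in Filter.atTop, ((m:ℝ) * (2*A)) / ((n:ℝ)+1) < ε/4 :=
    Filter.Tendsto.eventually_lt_const (show (0:ℝ) < ε/4 by positivity) h0
  filter_upwards [hev, Filter.eventually_ge_atTop m] with n hn1 hn2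
  intro x
  rw [dist_eq_norm, hσσ]
  -- decompose
  have hsub := σσ_sub f p hf hpc n x
  have hcontr : ‖σσ (fun t => f t - p t) n x‖ ≤ ε/4 := by
    apply contraction _ (hf.sub hpc) (ε/4) _ n x
    intro t
    exact hpa t
  have hpoly : ‖σσ p n x - p x‖ ≤ ((m:ℝ) * (2*A)) / ((n:ℝ)+1) := by
    have := σσ_poly_est m a n (by omega) x
    rw [← hp, ← hA] at this
    convert this using 3
  calc ‖f x - σσ f n x‖
      = ‖(f x - p x) + (p x - σσ p n x) + (σσ p n x - σσ f n x)‖ := by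
        congr 1
        ring
    _ ≤ ‖(f x - p x) + (p x - σσ p n x)‖ + ‖σσ p n x - σσ f n x‖ := norm_add_le _ _
    _ ≤ ‖f x - p x‖ + ‖p x - σσ p n x‖ + ‖σσ p n x - σσ f n x‖ := by
        exact add_le_add (norm_add_le _ _) le_rfl
    _ ≤ ε/4 + ((m:ℝ) * (2*A))/((n:ℝ)+1) + ε/4 := by
        apply add_le_add (add_le_add (hpa x) ?_) ?_
        · rw [norm_sub_rev]
          exact hpoly
        · rw [norm_sub_rev, ← hsub]
          exact hcontr
    _ < ε := by linarith
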